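/- (High coherence order.) Let d ≥ 2, s = r = d with E_S(m) = m and E_R(n) = n. Let ρ_S be the d×d matrix with (ρ_S)_{m m'} = 1/2 if m, m' ∈ {0, d−1} and 0 otherwise (the state (|0⟩ + |d−1⟩)/√2, exhibiting coherence of order d−1), and let ρ_R be the d×d matrix with all entries 1/d. Then the mutual asymmetry is A(ρ_S) + A(ρ_R) − A(ρ_S ⊗ ρ_R) = (log 2)/d. -/

import Mathlib

open Matrix Kronecker BigOperators ComplexOrder

/-- η(x) = −x·log x -/
noncomputable def entEta (x : ℝ) : ℝ := -x * Real.log x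

/-- von Neumann entropy S(ρ) = ∑ η(λ_i(ρ)) using the eigenvalues from the
spectral theorem for Hermitian matrices. -/
noncomputable def vnEntropy {n : Type*} [Fintype n] [DecidableEq n] (ρ : Matrix n n ℂ) : ℝ :=
  if h : ρ.IsHermitian then ∑ i, entEta (h.eigenvalues i) else 0

/-- A density matrix: Hermitian, positive semidefinite, trace one. -/
def IsDensityMatrix {n : Type*} [Fintype n] [DecidableEq n] (ρ : Matrix n n ℂ) : Prop :=
  ρ.IsHermitian ∧ ρ.PosSemidef ∧ ρ.trace = 1

/-- Pinching of a matrix by a function `f` on the index set. -/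
def pinch {I : Type*} {α : Type*} [DecidableEq α] (f : I → α) (M : Matrix I I ℂ) :
    Matrix I I ℂ :=
  Matrix.of fun i j => if f i = f j then M i j else 0

/-- Relative entropy of asymmetry A(ρ) = S(P_f ρ) − S(ρ). -/
noncomputable def asym {I : Type*} [Fintype I] [DecidableEq I] {α : Type*} [DecidableEq α]
    (f : I → α) (ρ : Matrix I I ℂ) : ℝ :=
  vnEntropy (pinch f ρ) - vnEntropy ρ

/-- Energy function of the global dephasing Π. -/
def globalE {s r : ℕ} (ES : Fin s → ℤ) (ER : Fin r → ℤ) : Fin s × Fin r → ℤ :=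
  fun p => ES p.1 + ER p.2

/-- Energy function of the local dephasing Δ. -/
def localE {s r : ℕ} (ES : Fin s → ℤ) (ER : Fin r → ℤ) : Fin s × Fin r → ℤ × ℤ :=
  fun p => (ES p.1, ER p.2)

/-! ### Auxiliary spectral lemmas -/

section Spectral
variable {n : Type*} [Fintype n] [DecidableEq n] {ρ : Matrix n n ℂ}

lemma conj_eig_diag (hρ : ρ.IsHermitian) :
    star (hρ.eigenvectorUnitary : Matrix n n ℂ) * ρ * (hρ.eigenvectorUnitary : Matrix n n ℂ)
      = diagonal (fun i => (hρ.eigenvalues i : ℂ)) := by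
  have := hρ.conjStarAlgAut_star_eigenvectorUnitary
  rw [Unitary.conjStarAlgAut_star_apply] at this
  exact this

lemma trace_eq_sum_eig (hρ : ρ.IsHermitian) : ρ.trace = ∑ i, (hρ.eigenvalues i : ℂ) := by
  conv_lhs => rw [hρ.spectral_theorem, Unitary.conjStarAlgAut_apply]
  rw [Matrix.trace_mul_cycle,
    (Matrix.mem_unitaryGroup_iff').mp (hρ.eigenvectorUnitary).2, one_mul]
  simp [Matrix.trace, Matrix.diag]

lemma conj_eig_diag_sq (hρ : ρ.IsHermitian) :
    star (hρ.eigenvectorUnitary : Matrix n n ℂ) * (ρ * ρ) * (hρ.eigenvectorUnitary : Matrix n n ℂ)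
      = diagonal (fun i => (hρ.eigenvalues i : ℂ)) * diagonal (fun i => (hρ.eigenvalues i : ℂ)) := by
  set U := (hρ.eigenvectorUnitary : Matrix n n ℂ) with hUdef
  have hU : U * star U = 1 := (Matrix.mem_unitaryGroup_iff).mp (hρ.eigenvectorUnitary).2
  rw [← conj_eig_diag hρ]
  have key : (star U * ρ * U) * (star U * ρ * U) = star U * (ρ * (U * star U) * ρ) * U := by
    noncomm_ring
  rw [key, hU, mul_one]

lemma trace_sq_eq_sum_eig (hρ : ρ.IsHermitian) :
    (ρ * ρ).trace = ∑ i, (hρ.eigenvalues i : ℂ)^2 := by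
  set U := (hρ.eigenvectorUnitary : Matrix n n ℂ) with hUdef
  have hU : U * star U = 1 := (Matrix.mem_unitaryGroup_iff).mp (hρ.eigenvectorUnitary).2
  have h := congrArg Matrix.trace (conj_eig_diag_sq hρ)
  rw [Matrix.trace_mul_cycle, ← mul_assoc, hU, one_mul] at h
  rw [h, Matrix.diagonal_mul_diagonal]
  simp [Matrix.trace, Matrix.diag, sq]

/-- if ρ² = aρ then every eigenvalue is 0 or a -/
lemma eig_of_sq (hρ : ρ.IsHermitian) (a : ℝ) (h : ρ * ρ = ((a : ℝ) : ℂ) • ρ) (i : n) :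
    hρ.eigenvalues i = 0 ∨ hρ.eigenvalues i = a := by
  have h1 := conj_eig_diag_sq hρ
  rw [h] at h1
  rw [Matrix.mul_smul, Matrix.smul_mul, conj_eig_diag hρ, Matrix.diagonal_mul_diagonal] at h1
  have h2 := congrFun (congrFun h1 i) i
  simp only [Matrix.diagonal_apply_eq, Matrix.smul_apply, smul_eq_mul] at h2
  have h3 : hρ.eigenvalues i * hρ.eigenvalues i = a * hρ.eigenvalues i := by
    exact_mod_cast h2.symm
  rcases mul_eq_zero.mp (show (hρ.eigenvalues i) * (hρ.eigenvalues i - a) = 0 by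
      ring_nf; linarith [h3]) with h4 | h4
  · exact Or.inl h4
  · exact Or.inr (by linarith)

/-- if ρ³ = (a+b)ρ² − abρ then every eigenvalue is 0, a or b -/
lemma eig_of_cube (hρ : ρ.IsHermitian) (a b : ℝ)
    (h : ρ * ρ * ρ = (((a + b : ℝ)) : ℂ) • (ρ * ρ) - (((a * b : ℝ)) : ℂ) • ρ) (i : n) :
    hρ.eigenvalues i = 0 ∨ hρ.eigenvalues i = a ∨ hρ.eigenvalues i = b := by
  have hU : (hρ.eigenvectorUnitary : Matrix n n ℂ) * star (hρ.eigenvectorUnitary : Matrix n n ℂ) = 1 :=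
    (Matrix.mem_unitaryGroup_iff).mp (hρ.eigenvectorUnitary).2
  have key : ∀ M N : Matrix n n ℂ,
      (star (hρ.eigenvectorUnitary : Matrix n n ℂ) * M * (hρ.eigenvectorUnitary : Matrix n n ℂ)) *
      (star (hρ.eigenvectorUnitary : Matrix n n ℂ) * N * (hρ.eigenvectorUnitary : Matrix n n ℂ))
      = star (hρ.eigenvectorUnitary : Matrix n n ℂ) * (M * ((hρ.eigenvectorUnitary : Matrix n n ℂ) * star (hρ.eigenvectorUnitary : Matrix n n ℂ)) * N) * (hρ.eigenvectorUnitary : Matrix n n ℂ) := by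
    intro M N; noncomm_ring
  have hcube : star (hρ.eigenvectorUnitary : Matrix n n ℂ) * (ρ * ρ * ρ) * (hρ.eigenvectorUnitary : Matrix n n ℂ)
      = (diagonal (fun i => (hρ.eigenvalues i : ℂ))) * (diagonal (fun i => (hρ.eigenvalues i : ℂ))) * (diagonal (fun i => (hρ.eigenvalues i : ℂ))) := by
    rw [← conj_eig_diag_sq hρ, ← conj_eig_diag hρ, key, hU, mul_one]
  rw [h] at hcube
  rw [Matrix.mul_sub, Matrix.sub_mul, Matrix.mul_smul, Matrix.smul_mul, Matrix.mul_smul,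
    Matrix.smul_mul, conj_eig_diag hρ, conj_eig_diag_sq hρ] at hcube
  have h2 := congrFun (congrFun hcube i) i
  simp only [Matrix.diagonal_mul_diagonal, Matrix.diagonal_apply_eq, Matrix.sub_apply,
    Matrix.smul_apply, smul_eq_mul] at h2
  set x := hρ.eigenvalues i with hx
  have h3 : x * x * x = (a + b) * (x * x) - (a * b) * x := by exact_mod_cast h2.symm
  have h4 : x * (x - a) * (x - b) = 0 := by ring_nf; ring_nf at h3; linarith
  rcases mul_eq_zero.mp h4 with h5 | h5
  · rcases mul_eq_zero.mp h5 with h6 | h6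
    · exact Or.inl h6
    · exact Or.inr (Or.inl (by linarith))
  · exact Or.inr (Or.inr (by linarith))

lemma sum_eig_eq (hρ : ρ.IsHermitian) (t : ℝ) (ht : ρ.trace = (t : ℂ)) :
    ∑ i, hρ.eigenvalues i = t := by
  have h := trace_eq_sum_eig hρ
  rw [ht] at h
  exact_mod_cast h.symm

lemma sum_eig_sq_eq (hρ : ρ.IsHermitian) (t : ℝ) (ht : (ρ * ρ).trace = (t : ℂ)) :
    ∑ i, (hρ.eigenvalues i)^2 = t := by
  have h := trace_sq_eq_sum_eig hρ
  rw [ht] at h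
  exact_mod_cast h.symm

lemma vnEntropy_quad (hρ : ρ.IsHermitian) (a c t : ℝ)
    (h : ρ * ρ = ((a : ℝ) : ℂ) • ρ) (hc : c * a = entEta a)
    (ht : ρ.trace = (t : ℂ)) : vnEntropy ρ = c * t := by
  rw [vnEntropy, dif_pos hρ]
  have key : ∀ i, entEta (hρ.eigenvalues i) = c * hρ.eigenvalues i := by
    intro i
    rcases eig_of_sq hρ a h i with h0 | h0 <;> rw [h0]
    · simp [entEta]
    · exact hc.symm
  rw [Finset.sum_congr rfl (fun i _ => key i), ← Finset.mul_sum, sum_eig_eq hρ t ht]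

lemma vnEntropy_cubic (hρ : ρ.IsHermitian) (a b c₁ c₂ t₁ t₂ : ℝ)
    (h : ρ * ρ * ρ = (((a + b : ℝ)) : ℂ) • (ρ * ρ) - (((a * b : ℝ)) : ℂ) • ρ)
    (hca : c₁ * a + c₂ * a^2 = entEta a) (hcb : c₁ * b + c₂ * b^2 = entEta b)
    (ht₁ : ρ.trace = (t₁ : ℂ)) (ht₂ : (ρ * ρ).trace = (t₂ : ℂ)) :
    vnEntropy ρ = c₁ * t₁ + c₂ * t₂ := by
  rw [vnEntropy, dif_pos hρ]
  have key : ∀ i, entEta (hρ.eigenvalues i)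
      = c₁ * hρ.eigenvalues i + c₂ * (hρ.eigenvalues i)^2 := by
    intro i
    rcases eig_of_cube hρ a b h i with h0 | h0 | h0 <;> rw [h0]
    · simp [entEta]
    · exact hca.symm
    · exact hcb.symm
  rw [Finset.sum_congr rfl (fun i _ => key i), Finset.sum_add_distrib, ← Finset.mul_sum,
    ← Finset.mul_sum, sum_eig_eq hρ t₁ ht₁, sum_eig_sq_eq hρ t₂ ht₂]

end Spectral

/-! ### The concrete matrices -/

noncomputable def matS (d : ℕ) : Matrix (Fin d) (Fin d) ℂ := Matrix.of fun m m' =>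
  if (m.val = 0 ∨ m.val = d - 1) ∧ (m'.val = 0 ∨ m'.val = d - 1) then 1 / 2 else 0

noncomputable def matR (d : ℕ) : Matrix (Fin d) (Fin d) ℂ := Matrix.of fun _ _ => 1 / (d : ℂ)

lemma sum_ite_two {d : ℕ} (hd : 2 ≤ d) (c : ℂ) :
    ∑ k : Fin d, (if k.val = 0 ∨ k.val = d - 1 then c else 0) = 2 * c := by
  have h0 : (0:ℕ) < d := by omega
  have h1 : d - 1 < d := by omega
  have heq : ∀ k : Fin d, (k.val = 0 ∨ k.val = d - 1) ↔
      k ∈ ({⟨0, h0⟩, ⟨d-1, h1⟩} : Finset (Fin d)) := by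
    intro k; simp [Fin.ext_iff]
  calc ∑ k : Fin d, (if k.val = 0 ∨ k.val = d - 1 then c else 0)
      = ∑ k : Fin d, (if k ∈ ({⟨0, h0⟩, ⟨d-1, h1⟩} : Finset (Fin d)) then c else 0) :=
        Finset.sum_congr rfl (fun k _ => if_congr (heq k) rfl rfl)
    _ = ∑ _k ∈ ({⟨0, h0⟩, ⟨d-1, h1⟩} : Finset (Fin d)), c := by
        rw [Finset.sum_ite_mem, Finset.univ_inter]
    _ = 2 * c := by
        rw [Finset.sum_pair (by simp [Fin.ext_iff]; omega)]; ring

lemma matS_herm (d : ℕ) : (matS d).IsHermitian := by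
  ext m m'
  simp only [matS, Matrix.conjTranspose_apply, Matrix.of_apply, apply_ite star, star_zero]
  have : ((m'.val = 0 ∨ m'.val = d - 1) ∧ (m.val = 0 ∨ m.val = d - 1)) ↔
      ((m.val = 0 ∨ m.val = d - 1) ∧ (m'.val = 0 ∨ m'.val = d - 1)) := and_comm
  rw [if_congr this rfl rfl]
  norm_num

lemma matR_herm (d : ℕ) : (matR d).IsHermitian := by
  ext m m'
  simp [matR, Matrix.conjTranspose_apply]

lemma matS_idem {d : ℕ} (hd : 2 ≤ d) : matS d * matS d = matS d := by
  ext m m'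
  rw [Matrix.mul_apply]
  by_cases hm : (m.val = 0 ∨ m.val = d - 1) <;>
    by_cases hm' : (m'.val = 0 ∨ m'.val = d - 1)
  · have key : ∀ k : Fin d, matS d m k * matS d k m'
        = (if k.val = 0 ∨ k.val = d - 1 then ((1:ℂ)/4) else 0) := by
      intro k
      by_cases hk : (k.val = 0 ∨ k.val = d - 1) <;> simp [matS, hm, hm', hk] <;> norm_num
    rw [Finset.sum_congr rfl fun k _ => key k, sum_ite_two hd]
    simp [matS, hm, hm']; norm_num
  all_goals
    have key : ∀ k : Fin d, matS d m k * matS d k m' = 0 := by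
      intro k; simp [matS, hm, hm']
  all_goals rw [Finset.sum_congr rfl fun k _ => key k]; simp [matS, hm, hm']

lemma matS_trace {d : ℕ} (hd : 2 ≤ d) : (matS d).trace = 1 := by
  rw [Matrix.trace]
  have key : ∀ m : Fin d, (matS d).diag m
      = (if m.val = 0 ∨ m.val = d - 1 then ((1:ℂ)/2) else 0) := by
    intro m
    by_cases hm : (m.val = 0 ∨ m.val = d - 1) <;> simp [matS, Matrix.diag, hm]
  rw [Finset.sum_congr rfl fun m _ => key m, sum_ite_two hd]
  norm_num

lemma matR_idem {d : ℕ} (hd : 2 ≤ d) : matR d * matR d = matR d := by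
  have hd0 : (d:ℂ) ≠ 0 := Nat.cast_ne_zero.mpr (by omega)
  ext m m'
  rw [Matrix.mul_apply]
  simp only [matR, Matrix.of_apply, Finset.sum_const, Finset.card_univ, Fintype.card_fin,
    nsmul_eq_mul]
  field_simp

lemma matR_trace {d : ℕ} (hd : 2 ≤ d) : (matR d).trace = 1 := by
  have hd0 : (d:ℂ) ≠ 0 := Nat.cast_ne_zero.mpr (by omega)
  rw [Matrix.trace]
  simp only [matR, Matrix.diag, Matrix.of_apply, Finset.sum_const, Finset.card_univ,
    Fintype.card_fin, nsmul_eq_mul]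
  field_simp

lemma pinch_isHermitian {I α : Type*} [Fintype I] [DecidableEq I] [DecidableEq α]
    (f : I → α) {ρ : Matrix I I ℂ} (hρ : ρ.IsHermitian) : (pinch f ρ).IsHermitian := by
  ext i j
  simp only [pinch, Matrix.conjTranspose_apply, Matrix.of_apply, apply_ite star, star_zero]
  by_cases h : f i = f j
  · rw [if_pos h, if_pos h.symm, hρ.apply i j]
  · rw [if_neg h, if_neg (fun hh : f j = f i => h hh.symm)]

lemma trace_pinch {I α : Type*} [Fintype I] [DecidableEq I] [DecidableEq α]
    (f : I → α) (M : Matrix I I ℂ) : (pinch f M).trace = M.trace := by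
  simp [Matrix.trace, Matrix.diag, pinch]

lemma pinch_matS {d : ℕ} (hd : 2 ≤ d) :
    pinch (fun m : Fin d => (m.val : ℤ)) (matS d)
      = Matrix.diagonal (fun m : Fin d =>
          if m.val = 0 ∨ m.val = d - 1 then ((1:ℂ)/2) else 0) := by
  ext m m'
  simp only [pinch, Matrix.of_apply, matS, Matrix.diagonal_apply]
  by_cases h : m = m'
  · subst h; simp
  · have hval : ¬((m.val : ℤ) = (m'.val : ℤ)) := by
      simp only [Fin.ext_iff] at h; omega
    simp [h, hval]

lemma pinch_matR {d : ℕ} :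
    pinch (fun m : Fin d => (m.val : ℤ)) (matR d)
      = Matrix.diagonal (fun _ : Fin d => 1 / (d:ℂ)) := by
  ext m m'
  simp only [pinch, Matrix.of_apply, matR, Matrix.diagonal_apply]
  by_cases h : m = m'
  · subst h; simp
  · have hval : ¬((m.val : ℤ) = (m'.val : ℤ)) := by
      simp only [Fin.ext_iff] at h; omega
    simp [h, hval]

lemma kron_herm {n m : Type*} [Fintype n] [DecidableEq n] [Fintype m] [DecidableEq m]
    {A : Matrix n n ℂ} {B : Matrix m m ℂ} (hA : A.IsHermitian) (hB : B.IsHermitian) :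
    (A ⊗ₖ B).IsHermitian := by
  ext ⟨i, j⟩ ⟨k, l⟩
  simp only [Matrix.conjTranspose_apply, Matrix.kroneckerMap_apply, star_mul']
  rw [hA.apply, hB.apply]

noncomputable def matA (d : ℕ) : Matrix (Fin d × Fin d) (Fin d × Fin d) ℂ :=
  Matrix.diagonal (fun x => if (x.1.val = 0 ∨ x.1.val = d - 1) ∧
    ¬((x.1.val = 0 ∧ x.2.val = d - 1) ∨ (x.1.val = d - 1 ∧ x.2.val = 0))
    then (2 * (d:ℂ))⁻¹ else 0)

noncomputable def matB (d : ℕ) : Matrix (Fin d × Fin d) (Fin d × Fin d) ℂ :=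
  Matrix.of fun x y => if ((x.1.val = 0 ∧ x.2.val = d - 1) ∨ (x.1.val = d - 1 ∧ x.2.val = 0)) ∧
    ((y.1.val = 0 ∧ y.2.val = d - 1) ∨ (y.1.val = d - 1 ∧ y.2.val = 0))
    then (2 * (d:ℂ))⁻¹ else 0

lemma pinch_split {d : ℕ} (hd : 2 ≤ d) :
    pinch (fun p : Fin d × Fin d => ((p.1.val : ℤ) + (p.2.val : ℤ))) (matS d ⊗ₖ matR d)
      = matA d + matB d := by
  have hd0 : (d:ℂ) ≠ 0 := Nat.cast_ne_zero.mpr (by omega)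
  have hv : (1/2 : ℂ) * (1/(d:ℂ)) = (2 * (d:ℂ))⁻¹ := by
    rw [mul_inv]; ring
  ext ⟨m, n⟩ ⟨m', n'⟩
  have h1 := m.isLt; have h2 := n.isLt; have h3 := m'.isLt; have h4 := n'.isLt
  simp only [pinch, Matrix.of_apply, Matrix.kroneckerMap_apply, matS, matR, matA, matB,
    Matrix.add_apply, Matrix.diagonal_apply, Prod.mk.injEq, Fin.ext_iff, ite_mul, zero_mul]
  split_ifs <;> first
    | rfl
    | (exfalso; omega)
    | (rw [← hv]; ring)
    | simp

lemma sum_ite_two' {d : ℕ} (hd : 2 ≤ d) (c : ℂ) :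
    ∑ z : Fin d × Fin d, (if ((z.1.val = 0 ∧ z.2.val = d - 1) ∨ (z.1.val = d - 1 ∧ z.2.val = 0))
      then c else 0) = 2 * c := by
  have h0 : (0:ℕ) < d := by omega
  have h1 : d - 1 < d := by omega
  set p : Fin d × Fin d := (⟨0, h0⟩, ⟨d-1, h1⟩) with hp
  set q : Fin d × Fin d := (⟨d-1, h1⟩, ⟨0, h0⟩) with hq
  have heq : ∀ z : Fin d × Fin d,
      ((z.1.val = 0 ∧ z.2.val = d - 1) ∨ (z.1.val = d - 1 ∧ z.2.val = 0)) ↔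
      z ∈ ({p, q} : Finset (Fin d × Fin d)) := by
    intro z
    simp [hp, hq, Prod.ext_iff, Fin.ext_iff]
  calc ∑ z : Fin d × Fin d, (if ((z.1.val = 0 ∧ z.2.val = d - 1) ∨ (z.1.val = d - 1 ∧ z.2.val = 0)) then c else 0)
      = ∑ z : Fin d × Fin d, (if z ∈ ({p, q} : Finset (Fin d × Fin d)) then c else 0) :=
        Finset.sum_congr rfl (fun z _ => if_congr (heq z) rfl rfl)
    _ = ∑ _z ∈ ({p, q} : Finset (Fin d × Fin d)), c := by
        rw [Finset.sum_ite_mem, Finset.univ_inter]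
    _ = 2 * c := by
        rw [Finset.sum_pair (by simp [hp, hq, Prod.ext_iff, Fin.ext_iff]; omega)]; ring

lemma matA_sq {d : ℕ} (hd : 2 ≤ d) :
    matA d * matA d = (((2 * (d:ℝ))⁻¹ : ℝ) : ℂ) • matA d := by
  rw [matA, Matrix.diagonal_mul_diagonal]
  ext x y
  by_cases h : x = y
  · subst h
    simp only [Matrix.diagonal_apply_eq, Matrix.smul_apply, smul_eq_mul]
    split_ifs <;> push_cast <;> ring
  · simp [Matrix.diagonal_apply_ne _ h, h]

lemma matB_sq {d : ℕ} (hd : 2 ≤ d) :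
    matB d * matB d = (((d:ℝ)⁻¹ : ℝ) : ℂ) • matB d := by
  have hd0 : (d:ℂ) ≠ 0 := Nat.cast_ne_zero.mpr (by omega)
  ext x y
  rw [Matrix.mul_apply]
  by_cases h : ((x.1.val = 0 ∧ x.2.val = d - 1) ∨ (x.1.val = d - 1 ∧ x.2.val = 0)) ∧
      ((y.1.val = 0 ∧ y.2.val = d - 1) ∨ (y.1.val = d - 1 ∧ y.2.val = 0))
  · have key : ∀ z : Fin d × Fin d, matB d x z * matB d z y
        = if ((z.1.val = 0 ∧ z.2.val = d - 1) ∨ (z.1.val = d - 1 ∧ z.2.val = 0))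
          then (2 * (d:ℂ))⁻¹ * (2 * (d:ℂ))⁻¹ else 0 := by
      intro z
      simp only [matB, Matrix.of_apply]
      split_ifs <;> first | ring1 | (exfalso; omega)
    rw [Finset.sum_congr rfl fun z _ => key z, sum_ite_two' hd]
    simp only [Matrix.smul_apply, matB, Matrix.of_apply, if_pos h, smul_eq_mul]
    push_cast
    field_simp
  · have key : ∀ z : Fin d × Fin d, matB d x z * matB d z y = 0 := by
      intro z
      simp only [matB, Matrix.of_apply]
      split_ifs <;> first | ring1 | (exfalso; omega)
    rw [Finset.sum_congr rfl fun z _ => key z]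
    simp only [Matrix.smul_apply, matB, Matrix.of_apply, if_neg h, smul_eq_mul,
      Finset.sum_const_zero, mul_zero]

lemma matA_mul_matB {d : ℕ} : matA d * matB d = 0 := by
  ext x y
  rw [matA, Matrix.diagonal_mul]
  simp only [matB, Matrix.of_apply, Matrix.zero_apply]
  split_ifs <;> first | (exfalso; omega) | ring1 | (exfalso; omega)

lemma matB_mul_matA {d : ℕ} : matB d * matA d = 0 := by
  ext x y
  rw [matA, Matrix.mul_diagonal]
  simp only [matB, Matrix.of_apply, Matrix.zero_apply]
  split_ifs <;> first | (exfalso; omega) | ring1 | (exfalso; omega)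

lemma matB_trace {d : ℕ} (hd : 2 ≤ d) : (matB d).trace = ((d:ℂ))⁻¹ := by
  have hd0 : (d:ℂ) ≠ 0 := Nat.cast_ne_zero.mpr (by omega)
  rw [Matrix.trace]
  have key : ∀ z : Fin d × Fin d, (matB d).diag z
      = if ((z.1.val = 0 ∧ z.2.val = d - 1) ∨ (z.1.val = d - 1 ∧ z.2.val = 0))
        then (2 * (d:ℂ))⁻¹ else 0 := by
    intro z
    simp only [matB, Matrix.diag, Matrix.of_apply]
    split_ifs <;> first | rfl | (exfalso; omega)
  rw [Finset.sum_congr rfl fun z _ => key z, sum_ite_two' hd]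
  field_simp

lemma sq_of_split {N : Type*} [Fintype N] [DecidableEq N] (A B : Matrix N N ℂ) (a b : ℂ)
    (hA : A * A = a • A) (hB : B * B = b • B) (hAB : A * B = 0) (hBA : B * A = 0) :
    (A + B) * (A + B) = a • A + b • B := by
  rw [Matrix.add_mul, Matrix.mul_add, Matrix.mul_add, hA, hB, hAB, hBA, add_zero, zero_add]

lemma cube_of_split {N : Type*} [Fintype N] [DecidableEq N] (A B : Matrix N N ℂ) (a b : ℂ)
    (hA : A * A = a • A) (hB : B * B = b • B) (hAB : A * B = 0) (hBA : B * A = 0) :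
    (A + B) * (A + B) * (A + B) = (a + b) • ((A + B) * (A + B)) - (a * b) • (A + B) := by
  rw [sq_of_split A B a b hA hB hAB hBA, Matrix.add_mul, Matrix.smul_mul, Matrix.smul_mul,
    Matrix.mul_add, Matrix.mul_add, hA, hB, hAB, hBA]
  module

/-- high coherence order: for the system state (|0⟩ + |d−1⟩)/√2 of
coherence order d−1 and the maximally coherent clock of dimension d, the mutual
asymmetry is (log 2)/d. -/
theorem high_coherence_order (d : ℕ) (hd : 2 ≤ d)
    (ρS : Matrix (Fin d) (Fin d) ℂ)
    (hρS : ρS = Matrix.of fun m m' =>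
      if (m.val = 0 ∨ m.val = d - 1) ∧ (m'.val = 0 ∨ m'.val = d - 1) then 1 / 2 else 0)
    (ρR : Matrix (Fin d) (Fin d) ℂ) (hρR : ρR = Matrix.of fun _ _ => 1 / (d : ℂ))
    (ES : Fin d → ℤ) (hES : ES = fun m => (m.val : ℤ))
    (ER : Fin d → ℤ) (hER : ER = fun n => (n.val : ℤ)) :
    asym ES ρS + asym ER ρR - asym (globalE ES ER) (ρS ⊗ₖ ρR) = Real.log 2 / d := by
  have hd0R : ((d:ℝ)) ≠ 0 := Nat.cast_ne_zero.mpr (by omega)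
  have hd0C : ((d:ℂ)) ≠ 0 := Nat.cast_ne_zero.mpr (by omega)
  have hdposR : (0:ℝ) < (d:ℝ) := by positivity
  subst hρS hρR hES hER
  have hSdef : (Matrix.of fun m m' : Fin d =>
      if (m.val = 0 ∨ m.val = d - 1) ∧ (m'.val = 0 ∨ m'.val = d - 1) then (1/2 : ℂ) else 0)
      = matS d := rfl
  have hRdef : (Matrix.of fun _ _ : Fin d => 1 / (d:ℂ)) = matR d := rfl
  rw [hSdef, hRdef]
  have hg : globalE (fun m : Fin d => (m.val : ℤ)) (fun n : Fin d => (n.val : ℤ))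
      = (fun p : Fin d × Fin d => ((p.1.val : ℤ) + (p.2.val : ℤ))) := rfl
  rw [hg]
  -- entropies of the pure states are 0
  have hS0 : vnEntropy (matS d) = 0 := by
    have := vnEntropy_quad (matS_herm d) 1 0 1
      (by rw [matS_idem hd]; norm_num)
      (by simp [entEta])
      (by rw [matS_trace hd]; norm_num)
    simpa using this
  have hR0 : vnEntropy (matR d) = 0 := by
    have := vnEntropy_quad (matR_herm d) 1 0 1
      (by rw [matR_idem hd]; norm_num)
      (by simp [entEta])
      (by rw [matR_trace hd]; norm_num)
    simpa using this
  have hSR0 : vnEntropy (matS d ⊗ₖ matR d) = 0 := by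
    have := vnEntropy_quad (kron_herm (matS_herm d) (matR_herm d)) 1 0 1
      (by rw [← Matrix.mul_kronecker_mul, matS_idem hd, matR_idem hd]; norm_num)
      (by simp [entEta])
      (by rw [Matrix.trace_kronecker, matS_trace hd, matR_trace hd]; norm_num)
    simpa using this
  -- entropy of the pinched system state
  have hSp : vnEntropy (pinch (fun m : Fin d => (m.val : ℤ)) (matS d)) = Real.log 2 := by
    have hherm := pinch_isHermitian (fun m : Fin d => (m.val : ℤ)) (matS_herm d)
    have hsq : pinch (fun m : Fin d => (m.val : ℤ)) (matS d) *
        pinch (fun m : Fin d => (m.val : ℤ)) (matS d)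
        = (((1/2 : ℝ)) : ℂ) • pinch (fun m : Fin d => (m.val : ℤ)) (matS d) := by
      rw [pinch_matS hd, Matrix.diagonal_mul_diagonal]
      ext i j
      by_cases h : i = j
      · subst h
        simp only [Matrix.diagonal_apply_eq, Matrix.smul_apply, smul_eq_mul]
        split_ifs <;> push_cast <;> ring
      · simp [Matrix.diagonal_apply_ne _ h]
    have hc : Real.log 2 * (1/2 : ℝ) = entEta (1/2 : ℝ) := by
      simp [entEta, one_div, Real.log_inv]; ring
    have ht : (pinch (fun m : Fin d => (m.val : ℤ)) (matS d)).trace = ((1:ℝ) : ℂ) := by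
      rw [trace_pinch, matS_trace hd]; norm_num
    have := vnEntropy_quad hherm (1/2) (Real.log 2) 1 hsq hc ht
    simpa using this
  -- entropy of the pinched clock state
  have hRp : vnEntropy (pinch (fun m : Fin d => (m.val : ℤ)) (matR d)) = Real.log d := by
    have hherm := pinch_isHermitian (fun m : Fin d => (m.val : ℤ)) (matR_herm d)
    have hsq : pinch (fun m : Fin d => (m.val : ℤ)) (matR d) *
        pinch (fun m : Fin d => (m.val : ℤ)) (matR d)
        = ((((d:ℝ))⁻¹ : ℝ) : ℂ) • pinch (fun m : Fin d => (m.val : ℤ)) (matR d) := by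
      rw [pinch_matR, Matrix.diagonal_mul_diagonal]
      ext i j
      by_cases h : i = j
      · subst h
        simp only [Matrix.diagonal_apply_eq, Matrix.smul_apply, smul_eq_mul]
        push_cast
        ring
      · simp [Matrix.diagonal_apply_ne _ h]
    have hc : Real.log d * ((d:ℝ))⁻¹ = entEta (((d:ℝ))⁻¹) := by
      simp [entEta, Real.log_inv]; ring
    have ht : (pinch (fun m : Fin d => (m.val : ℤ)) (matR d)).trace = ((1:ℝ) : ℂ) := by
      rw [trace_pinch, matR_trace hd]; norm_num
    have := vnEntropy_quad hherm ((d:ℝ))⁻¹ (Real.log d) 1 hsq hc ht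
    simpa using this
  -- entropy of the globally pinched state
  set g : Fin d × Fin d → ℤ := fun p : Fin d × Fin d => ((p.1.val : ℤ) + (p.2.val : ℤ)) with hgdef
  have hQp : vnEntropy (pinch g (matS d ⊗ₖ matR d))
      = (Real.log d + 2 * Real.log 2) * 1
        + (-(2 * (d:ℝ) * Real.log 2)) * (((d:ℝ) + 1)/(2 * (d:ℝ)^2)) := by
    have hherm := pinch_isHermitian g (kron_herm (matS_herm d) (matR_herm d))
    set a : ℝ := (2 * (d:ℝ))⁻¹ with ha
    set b : ℝ := ((d:ℝ))⁻¹ with hb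
    have haC : ((a : ℝ) : ℂ) = (2 * (d:ℂ))⁻¹ := by rw [ha]; push_cast; ring
    have hbC : ((b : ℝ) : ℂ) = ((d:ℂ))⁻¹ := by rw [hb]; push_cast; ring
    have hAsq : matA d * matA d = ((a:ℝ):ℂ) • matA d := matA_sq hd
    have hBsq : matB d * matB d = ((b:ℝ):ℂ) • matB d := matB_sq hd
    have hQsplit : pinch g (matS d ⊗ₖ matR d) = matA d + matB d := pinch_split hd
    have htraceAB : (matA d).trace + (matB d).trace = 1 := by
      rw [← Matrix.trace_add, ← hQsplit, trace_pinch, Matrix.trace_kronecker,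
        matS_trace hd, matR_trace hd, one_mul]
    have htraceA : (matA d).trace = 1 - ((d:ℂ))⁻¹ := by
      rw [← matB_trace hd]; linear_combination htraceAB
    have hcube : pinch g (matS d ⊗ₖ matR d) * pinch g (matS d ⊗ₖ matR d) *
        pinch g (matS d ⊗ₖ matR d)
        = (((a + b : ℝ)) : ℂ) • (pinch g (matS d ⊗ₖ matR d) * pinch g (matS d ⊗ₖ matR d))
          - (((a * b : ℝ)) : ℂ) • pinch g (matS d ⊗ₖ matR d) := by
      rw [hQsplit]
      have := cube_of_split (matA d) (matB d) ((a:ℝ):ℂ) ((b:ℝ):ℂ)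
        hAsq hBsq matA_mul_matB matB_mul_matA
      rw [this]
      push_cast
      ring_nf
    have ht₁ : (pinch g (matS d ⊗ₖ matR d)).trace = ((1:ℝ) : ℂ) := by
      rw [trace_pinch, Matrix.trace_kronecker, matS_trace hd, matR_trace hd]; norm_num
    have ht₂ : (pinch g (matS d ⊗ₖ matR d) * pinch g (matS d ⊗ₖ matR d)).trace
        = ((((d:ℝ) + 1)/(2 * (d:ℝ)^2) : ℝ) : ℂ) := by
      rw [hQsplit, sq_of_split (matA d) (matB d) ((a:ℝ):ℂ) ((b:ℝ):ℂ)
        hAsq hBsq matA_mul_matB matB_mul_matA]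
      rw [Matrix.trace_add, Matrix.trace_smul, Matrix.trace_smul, htraceA, matB_trace hd,
        haC, hbC]
      push_cast
      field_simp
      ring_nf
      field_simp
    have hca : (Real.log d + 2 * Real.log 2) * a + (-(2 * (d:ℝ) * Real.log 2)) * a^2
        = entEta a := by
      have hlog : Real.log a = -(Real.log 2 + Real.log (d:ℝ)) := by
        rw [ha, Real.log_inv, Real.log_mul two_ne_zero hd0R]
      rw [entEta, hlog, ha]
      field_simp
      ring
    have hcb : (Real.log d + 2 * Real.log 2) * b + (-(2 * (d:ℝ) * Real.log 2)) * b^2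
        = entEta b := by
      have hlog : Real.log b = -Real.log (d:ℝ) := by rw [hb, Real.log_inv]
      rw [entEta, hlog, hb]
      field_simp
      ring
    exact vnEntropy_cubic hherm a b (Real.log d + 2 * Real.log 2) (-(2 * (d:ℝ) * Real.log 2))
      1 (((d:ℝ) + 1)/(2 * (d:ℝ)^2)) hcube hca hcb ht₁ ht₂
  -- put everything together
  unfold asym
  rw [hS0, hR0, hSR0, hSp, hRp, hQp]
  field_simp
  ring
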